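/- The monoid S presented by ⟨a, b | a*b*a*b = 1, b*a*b*a = 1⟩ is an LEF semigroup. -/

import Mathlib

namespace Stmt4

/-- A semigroup `S` is LEF if for every finite subset `H` of `S` there exist a finite
semigroup `F` and a function `f : S → F` injective on `H` such that
`f (x * y) = f x * f y` whenever `x, y, x * y ∈ H`. -/
def IsLEF (S : Type*) [Semigroup S] : Prop :=
  ∀ H : Finset S, ∃ (F : Type) (_ : Semigroup F) (_ : Fintype F) (f : S → F),
    Set.InjOn f ↑H ∧
      ∀ x ∈ H, ∀ y ∈ H, x * y ∈ H → f (x * y) = f x * f y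

/-- The generator `a` of the free monoid on two generators. -/
def a : FreeMonoid (Fin 2) := FreeMonoid.of 0

/-- The generator `b` of the free monoid on two generators. -/
def b : FreeMonoid (Fin 2) := FreeMonoid.of 1

/-- The defining relations `a * b * a * b = 1` and `b * a * b * a = 1`. -/
def rel : FreeMonoid (Fin 2) → FreeMonoid (Fin 2) → Prop :=
  fun x y => (x = a * b * a * b ∧ y = 1) ∨ (x = b * a * b * a ∧ y = 1)

/-- The monoid `S = ⟨a, b ∣ abab = 1, baba = 1⟩`. -/
def S : Type := (conGen rel).Quotient

instance : Monoid S := Con.monoid _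


/-! ### 2×2 matrices -/

structure M2 (R : Type) where
  p : R
  q : R
  r : R
  s : R
deriving DecidableEq

instance {R : Type} [Fintype R] [DecidableEq R] : Fintype (M2 R) :=
  Fintype.ofEquiv (R × R × R × R)
    { toFun := fun x => ⟨x.1, x.2.1, x.2.2.1, x.2.2.2⟩
      invFun := fun m => ⟨m.p, m.q, m.r, m.s⟩
      left_inv := fun x => rfl
      right_inv := fun m => rfl }

variable {R : Type} [CommRing R]

instance : Mul (M2 R) :=
  ⟨fun M N => ⟨M.p*N.p + M.q*N.r, M.p*N.q + M.q*N.s, M.r*N.p + M.s*N.r, M.r*N.q + M.s*N.s⟩⟩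

instance : One (M2 R) := ⟨⟨1,0,0,1⟩⟩

lemma M2.mul_def (M N : M2 R) :
    M * N = ⟨M.p*N.p + M.q*N.r, M.p*N.q + M.q*N.s, M.r*N.p + M.s*N.r, M.r*N.q + M.s*N.s⟩ := rfl

lemma M2.one_def : (1 : M2 R) = ⟨1,0,0,1⟩ := rfl

instance : Monoid (M2 R) where
  mul_assoc := by
    rintro ⟨p1,q1,r1,s1⟩ ⟨p2,q2,r2,s2⟩ ⟨p3,q3,r3,s3⟩
    simp only [M2.mul_def, M2.mk.injEq]
    refine ⟨by ring, by ring, by ring, by ring⟩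
  one_mul := by rintro ⟨p,q,r,s⟩; simp [M2.mul_def, M2.one_def]
  mul_one := by rintro ⟨p,q,r,s⟩; simp [M2.mul_def, M2.one_def]

def M2.det (M : M2 R) : R := M.p * M.s - M.q * M.r

lemma M2.det_mul (M N : M2 R) : (M * N).det = M.det * N.det := by
  rcases M with ⟨p1,q1,r1,s1⟩; rcases N with ⟨p2,q2,r2,s2⟩
  simp only [M2.mul_def, M2.det]; ring

def M2.map {R' : Type} [CommRing R'] (f : R →+* R') (M : M2 R) : M2 R' :=
  ⟨f M.p, f M.q, f M.r, f M.s⟩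

lemma M2.map_mul {R' : Type} [CommRing R'] (f : R →+* R') (M N : M2 R) :
    M2.map f (M * N) = M2.map f M * M2.map f N := by
  rcases M with ⟨p1,q1,r1,s1⟩; rcases N with ⟨p2,q2,r2,s2⟩
  simp only [M2.mul_def, M2.map, map_add, map_mul, M2.mk.injEq]
  exact ⟨by simp, by simp, by simp, by simp⟩

/-! ### The representation -/

def Amat : M2 ℤ := ⟨0,1,1,-2⟩
def Bmat : M2 ℤ := ⟨1,2,0,1⟩

def mat : Fin 2 → M2 ℤ := fun c => if c = 0 then Amat else Bmat

def φl (w : List (Fin 2)) : M2 ℤ := (w.map mat).prod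

@[simp] lemma φl_nil : φl [] = 1 := rfl
@[simp] lemma φl_cons (c : Fin 2) (w : List (Fin 2)) : φl (c :: w) = mat c * φl w := by
  simp [φl]

lemma φl_append (u v : List (Fin 2)) : φl (u ++ v) = φl u * φl v := by
  simp [φl]

def φ₀ : FreeMonoid (Fin 2) →* M2 ℤ := FreeMonoid.lift mat

lemma φ₀_ofList (w : List (Fin 2)) : φ₀ (FreeMonoid.ofList w) = φl w := by
  simp [φ₀, FreeMonoid.lift_apply, φl]

lemma rel_le_ker : conGen rel ≤ Con.ker φ₀ := by
  apply Con.conGen_le.2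
  rintro x y (⟨rfl, rfl⟩ | ⟨rfl, rfl⟩) <;>
    · show φ₀ _ = φ₀ _
      simp only [a, b, map_mul, map_one, φ₀, FreeMonoid.lift_eval_of]
      decide

def φS : S →* M2 ℤ := Con.lift _ φ₀ rel_le_ker

def π : FreeMonoid (Fin 2) →* S := Con.mk' _

lemma φS_π (x : FreeMonoid (Fin 2)) : φS (π x) = φ₀ x := Con.lift_mk' rel_le_ker x

def πl (w : List (Fin 2)) : S := π (FreeMonoid.ofList w)

lemma φS_πl (w : List (Fin 2)) : φS (πl w) = φl w := by
  rw [πl, φS_π, φ₀_ofList]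


/-! ### Rewriting to normal form -/

def F1 : List (Fin 2) := [0,1,0,1]
def F2 : List (Fin 2) := [1,0,1,0]

def Normal (w : List (Fin 2)) : Prop :=
  ∀ l r : List (Fin 2), w ≠ l ++ F1 ++ r ∧ w ≠ l ++ F2 ++ r

lemma normal_nil : Normal [] := by
  intro l r
  constructor <;> · intro h; cases l <;> simp [F1, F2] at h

lemma normal_tail {c : Fin 2} {w : List (Fin 2)} (h : Normal (c :: w)) : Normal w := by
  intro l r
  constructor
  · intro hw; exact ((h (c :: l) r).1 (by simp [hw]))
  · intro hw; exact ((h (c :: l) r).2 (by simp [hw]))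

lemma normal_drop {w : List (Fin 2)} (h : Normal w) (n : ℕ) : Normal (w.drop n) := by
  induction n generalizing w with
  | zero => simpa using h
  | succ k ih =>
    cases w with
    | nil => simpa using normal_nil
    | cons c t =>
      simpa using ih (normal_tail h)

/-- the tail of the forbidden word starting with `c` -/
def tf : Fin 2 → List (Fin 2) := fun c => if c = 0 then [1,0,1] else [0,1,0]

def step (c : Fin 2) (u : List (Fin 2)) : List (Fin 2) :=
  if u.take 3 = tf c then u.drop 3 else c :: u

def red (w : List (Fin 2)) : List (Fin 2) := w.foldr step []

@[simp] lemma red_nil : red [] = [] := rfl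
@[simp] lemma red_cons (c : Fin 2) (w : List (Fin 2)) : red (c :: w) = step c (red w) := rfl

lemma normal_step {c : Fin 2} {u : List (Fin 2)} (h : Normal u) : Normal (step c u) := by
  unfold step
  split
  · exact normal_drop h 3
  · next hne =>
    intro l r
    constructor <;>
    · intro hw
      cases l with
      | cons c' l' =>
        simp only [List.cons_append, List.cons.injEq] at hw
        first
        | exact (h l' r).1 hw.2
        | exact (h l' r).2 hw.2
      | nil =>
        simp only [List.nil_append] at hw
        -- c :: u = F ++ r with F of length 4
        first
        | (have : c = 0 ∧ u = [1,0,1] ++ r := by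
            simpa [F1, List.cons.injEq] using hw)
        | (have : c = 1 ∧ u = [0,1,0] ++ r := by
            simpa [F2, List.cons.injEq] using hw)
        · rcases this with ⟨hc, hu⟩
          apply hne
          simp [hu, tf, hc]

lemma take_drop_of_take_eq {u : List (Fin 2)} {t : List (Fin 2)} (h : u.take 3 = t) :
    u = t ++ u.drop 3 := by
  conv_lhs => rw [← List.take_append_drop 3 u]
  rw [h]

lemma πl_F1 : πl F1 = 1 := by
  have h : (conGen rel) (FreeMonoid.ofList F1) 1 := by
    apply ConGen.Rel.of
    left
    constructor
    · rfl
    · rfl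
  exact (Con.eq _).2 h

lemma πl_F2 : πl F2 = 1 := by
  have h : (conGen rel) (FreeMonoid.ofList F2) 1 := by
    apply ConGen.Rel.of
    right
    constructor
    · rfl
    · rfl
  exact (Con.eq _).2 h

lemma πl_append (u v : List (Fin 2)) : πl (u ++ v) = πl u * πl v := by
  simp [πl, FreeMonoid.ofList_append, map_mul]

lemma πl_step (c : Fin 2) (u : List (Fin 2)) : πl (step c u) = πl (c :: u) := by
  unfold step
  split
  · next h =>
    have hu : c :: u = (c :: tf c) ++ u.drop 3 := by
      have := take_drop_of_take_eq h
      simp only [List.cons_append]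
      exact congrArg (c :: ·) this
    rw [hu, πl_append]
    have hF : πl (c :: tf c) = 1 := by
      fin_cases c
      · simpa [tf, F1] using πl_F1
      · simpa [tf, F2] using πl_F2
    rw [hF, one_mul]
  · rfl

lemma πl_red (w : List (Fin 2)) : πl (red w) = πl w := by
  induction w with
  | nil => rfl
  | cons c t ih =>
    rw [red_cons, πl_step]
    have : (c :: t) = [c] ++ t := rfl
    rw [this, πl_append, ← ih, ← πl_append]
    rfl

lemma normal_red (w : List (Fin 2)) : Normal (red w) := by
  induction w with
  | nil => exact normal_nil
  | cons c t ih => exact normal_step ih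


/-! ### Region invariants (ping-pong) -/

def J : Fin 2 → Fin 2 → Fin 2 → ℤ → ℤ → Prop
  | 0,0,0 => fun p r => (0 < r ∧ 0 ≤ 2*p + r ∧ 3*p + r ≤ 0) ∨ (r < 0 ∧ 2*p + r ≤ 0 ∧ 0 ≤ 3*p + r)
  | 0,0,1 => fun p r => (0 < r ∧ 0 < p + r ∧ p ≤ 0) ∨ (r < 0 ∧ p + r < 0 ∧ 0 ≤ p)
  | 0,1,0 => fun p r => (0 < p ∧ r ≤ 0 ∧ 0 ≤ p + r) ∨ (p < 0 ∧ 0 ≤ r ∧ p + r ≤ 0)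
  | 0,1,1 => fun p r => (0 < r ∧ 0 ≤ p ∧ p < r) ∨ (r < 0 ∧ p ≤ 0 ∧ r < p)
  | 1,0,0 => fun p r => (0 < r ∧ r < p ∧ p ≤ 2*r) ∨ (r < 0 ∧ p < r ∧ 2*r ≤ p)
  | 1,0,1 => fun p r => (0 < p ∧ 0 ≤ r ∧ 2*r ≤ p) ∨ (p < 0 ∧ r ≤ 0 ∧ p ≤ 2*r)
  | 1,1,0 => fun p r => (0 < p ∧ 0 ≤ r ∧ 3*r < p) ∨ (p < 0 ∧ r ≤ 0 ∧ p < 3*r)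
  | 1,1,1 => fun p r => (0 < p ∧ 0 ≤ r ∧ 5*r ≤ p) ∨ (p < 0 ∧ r ≤ 0 ∧ p ≤ 5*r)

def good (M : M2 ℤ) (c1 c2 c3 : Fin 2) : Prop :=
  J c1 c2 c3 M.p M.r ∧ J c1 c2 c3 M.q M.s

lemma fin2 : ∀ c : Fin 2, c = 0 ∨ c = 1 := by decide

lemma Jtrans (c c1 c2 c3 : Fin 2) (p r : ℤ)
    (hf1 : ¬(c = 0 ∧ c1 = 1 ∧ c2 = 0 ∧ c3 = 1))
    (hf2 : ¬(c = 1 ∧ c1 = 0 ∧ c2 = 1 ∧ c3 = 0))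
    (h : J c1 c2 c3 p r) :
    J c c1 c2 (if c = 0 then r else p + 2*r) (if c = 0 then p - 2*r else r) := by
  rcases fin2 c with rfl | rfl <;> rcases fin2 c1 with rfl | rfl <;>
    rcases fin2 c2 with rfl | rfl <;> rcases fin2 c3 with rfl | rfl <;>
    (try exact absurd (by decide) hf1) <;>
    (try exact absurd (by decide) hf2)
  all_goals simp only [J] at h ⊢
  all_goals norm_num
  all_goals omega

lemma mat_mul_entries (c : Fin 2) (M : M2 ℤ) :
    mat c * M = ⟨(if c = 0 then M.r else M.p + 2*M.r), (if c = 0 then M.s else M.q + 2*M.s),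
                 (if c = 0 then M.p - 2*M.r else M.r), (if c = 0 then M.q - 2*M.s else M.s)⟩ := by
  rcases fin2 c with rfl | rfl <;> rcases M with ⟨p,q,r,s⟩ <;>
    simp [mat, Amat, Bmat, M2.mul_def, M2.mk.injEq] <;> omega

lemma region_main : ∀ (t : List (Fin 2)) (c1 c2 c3 : Fin 2), Normal (c1::c2::c3::t) →
    good (φl (c1::c2::c3::t)) c1 c2 c3 := by
  intro t
  induction t with
  | nil =>
    intro c1 c2 c3 _
    rcases fin2 c1 with rfl | rfl <;> rcases fin2 c2 with rfl | rfl <;>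
      rcases fin2 c3 with rfl | rfl <;>
      (constructor <;> simp [good, φl, mat, Amat, Bmat, M2.mul_def, M2.one_def, J] <;> omega)
  | cons c4 t' ih =>
    intro c1 c2 c3 h
    have ihg := ih c2 c3 c4 (normal_tail h)
    have hf1 : ¬(c1 = 0 ∧ c2 = 1 ∧ c3 = 0 ∧ c4 = 1) := by
      rintro ⟨rfl, rfl, rfl, rfl⟩; exact (h [] t').1 rfl
    have hf2 : ¬(c1 = 1 ∧ c2 = 0 ∧ c3 = 1 ∧ c4 = 0) := by
      rintro ⟨rfl, rfl, rfl, rfl⟩; exact (h [] t').2 rfl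
    have hmul : φl (c1::c2::c3::c4::t') = mat c1 * φl (c2::c3::c4::t') := φl_cons _ _
    rw [hmul, mat_mul_entries]
    exact ⟨Jtrans c1 c2 c3 c4 _ _ hf1 hf2 ihg.1, Jtrans c1 c2 c3 c4 _ _ hf1 hf2 ihg.2⟩

lemma det_φl (w : List (Fin 2)) : (φl w).det = 1 ∨ (φl w).det = -1 := by
  induction w with
  | nil => left; rfl
  | cons c t ih =>
    rw [φl_cons, M2.det_mul]
    have hc : (mat c).det = 1 ∨ (mat c).det = -1 := by
      rcases fin2 c with rfl | rfl <;> simp [mat, Amat, Bmat, M2.det]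
    rcases hc with h | h <;> rcases ih with h' | h' <;> rw [h, h'] <;> norm_num

lemma not_good_one (c1 c2 c3 : Fin 2) : ¬ good 1 c1 c2 c3 := by
  rcases fin2 c1 with rfl | rfl <;> rcases fin2 c2 with rfl | rfl <;>
    rcases fin2 c3 with rfl | rfl <;>
    (rintro ⟨h1, h2⟩; revert h1 h2; show J _ _ _ (1:ℤ) (0:ℤ) → J _ _ _ (0:ℤ) (1:ℤ) → False;
     simp only [J] <;> omega)

lemma J_disj (x y x' y' : Fin 2) (p r : ℤ) (h0 : J 0 x y p r) (h1 : J 1 x' y' p r) : r = 0 := by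
  rcases fin2 x with rfl | rfl <;> rcases fin2 y with rfl | rfl <;>
    rcases fin2 x' with rfl | rfl <;> rcases fin2 y' with rfl | rfl <;>
    simp_all only [J] <;> omega

lemma good_disj {M : M2 ℤ} (hdet : M.det = 1 ∨ M.det = -1) {x y x' y' : Fin 2}
    (h0 : good M 0 x y) (h1 : good M 1 x' y') : False := by
  rcases M with ⟨p,q,r,s⟩
  have hr := J_disj x y x' y' p r h0.1 h1.1
  have hs := J_disj x y x' y' q s h0.2 h1.2
  subst hr; subst hs
  simp only [M2.det, mul_zero, sub_zero] at hdet
  norm_num at hdet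


/-! ### Injectivity on normal words -/

lemma not_good_small0 (u : List (Fin 2)) (hu : u = [0] ∨ u = [0,0] ∨ u = [0,1])
    (x y : Fin 2) : ¬ good (φl u) 1 x y := by
  rintro ⟨h1, h2⟩
  rcases hu with rfl | rfl | rfl <;>
    revert h1 h2 <;>
    simp only [φl, List.map, List.prod, mat, Amat, Bmat, M2.mul_def, M2.one_def] <;>
    rcases fin2 x with rfl | rfl <;> rcases fin2 y with rfl | rfl <;>
    simp only [J] <;> norm_num <;> omega

lemma not_good_small1 (v : List (Fin 2)) (hv : v = [1] ∨ v = [1,1] ∨ v = [1,0])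
    (x y : Fin 2) : ¬ good (φl v) 0 x y := by
  rintro ⟨h1, h2⟩
  rcases hv with rfl | rfl | rfl <;>
    revert h1 h2 <;>
    simp only [φl, List.map, List.prod, mat, Amat, Bmat, M2.mul_def, M2.one_def] <;>
    rcases fin2 x with rfl | rfl <;> rcases fin2 y with rfl | rfl <;>
    simp only [J] <;> norm_num <;> omega

lemma small_small (u v : List (Fin 2)) (hu : u = [0] ∨ u = [0,0] ∨ u = [0,1])
    (hv : v = [1] ∨ v = [1,1] ∨ v = [1,0]) : φl u ≠ φl v := by
  rcases hu with rfl | rfl | rfl <;> rcases hv with rfl | rfl | rfl <;> decide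

lemma phi_ne_one (u : List (Fin 2)) (hn : Normal u) (hne : u ≠ []) : φl u ≠ 1 := by
  intro h1
  rcases u with _ | ⟨c1, _ | ⟨c2, _ | ⟨c3, t⟩⟩⟩
  · exact hne rfl
  · rcases fin2 c1 with rfl | rfl <;> revert h1 <;> decide
  · rcases fin2 c1 with rfl | rfl <;> rcases fin2 c2 with rfl | rfl <;> revert h1 <;> decide
  · exact not_good_one c1 c2 c3 (h1 ▸ region_main t c1 c2 c3 hn)

lemma first_letter {u v : List (Fin 2)} (hu : Normal (0 :: u)) (hv : Normal (1 :: v)) :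
    φl (0 :: u) ≠ φl (1 :: v) := by
  intro heq
  have hsmall0 : u = [] ∨ (∃ x, u = [x]) ∨ (∃ x y t, u = x :: y :: t) := by
    rcases u with _ | ⟨x, _ | ⟨y, t⟩⟩
    · exact Or.inl rfl
    · exact Or.inr (Or.inl ⟨x, rfl⟩)
    · exact Or.inr (Or.inr ⟨x, y, t, rfl⟩)
  have hsmall1 : v = [] ∨ (∃ x, v = [x]) ∨ (∃ x y t, v = x :: y :: t) := by
    rcases v with _ | ⟨x, _ | ⟨y, t⟩⟩
    · exact Or.inl rfl
    · exact Or.inr (Or.inl ⟨x, rfl⟩)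
    · exact Or.inr (Or.inr ⟨x, y, t, rfl⟩)
  -- helper facts
  rcases hsmall0 with rfl | ⟨x, rfl⟩ | ⟨x, y, t, rfl⟩ <;>
    rcases hsmall1 with rfl | ⟨x', rfl⟩ | ⟨x', y', t', rfl⟩
  · exact small_small [0] [1] (Or.inl rfl) (Or.inl rfl) heq
  · rcases fin2 x' with rfl | rfl
    · exact small_small [0] [1,0] (Or.inl rfl) (Or.inr (Or.inr rfl)) heq
    · exact small_small [0] [1,1] (Or.inl rfl) (Or.inr (Or.inl rfl)) heq
  · exact not_good_small0 [0] (Or.inl rfl) x' y'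
      (heq ▸ region_main t' 1 x' y' hv)
  · rcases fin2 x with rfl | rfl
    · exact small_small [0,0] [1] (Or.inr (Or.inl rfl)) (Or.inl rfl) heq
    · exact small_small [0,1] [1] (Or.inr (Or.inr rfl)) (Or.inl rfl) heq
  · rcases fin2 x with rfl | rfl <;> rcases fin2 x' with rfl | rfl
    · exact small_small [0,0] [1,0] (Or.inr (Or.inl rfl)) (Or.inr (Or.inr rfl)) heq
    · exact small_small [0,0] [1,1] (Or.inr (Or.inl rfl)) (Or.inr (Or.inl rfl)) heq
    · exact small_small [0,1] [1,0] (Or.inr (Or.inr rfl)) (Or.inr (Or.inr rfl)) heq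
    · exact small_small [0,1] [1,1] (Or.inr (Or.inr rfl)) (Or.inr (Or.inl rfl)) heq
  · rcases fin2 x with rfl | rfl
    · exact not_good_small0 [0,0] (Or.inr (Or.inl rfl)) x' y'
        (heq ▸ region_main t' 1 x' y' hv)
    · exact not_good_small0 [0,1] (Or.inr (Or.inr rfl)) x' y'
        (heq ▸ region_main t' 1 x' y' hv)
  · exact not_good_small1 [1] (Or.inl rfl) x y
      (heq ▸ region_main t 0 x y hu)
  · rcases fin2 x' with rfl | rfl
    · exact not_good_small1 [1,0] (Or.inr (Or.inr rfl)) x y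
        (heq ▸ region_main t 0 x y hu)
    · exact not_good_small1 [1,1] (Or.inr (Or.inl rfl)) x y
        (heq ▸ region_main t 0 x y hu)
  · exact good_disj (det_φl (0 :: x :: y :: t)) (region_main t 0 x y hu)
      (heq ▸ region_main t' 1 x' y' hv)

lemma mat_cancel (c : Fin 2) {X Y : M2 ℤ} (h : mat c * X = mat c * Y) : X = Y := by
  rcases fin2 c with rfl | rfl <;> rcases X with ⟨p,q,r,s⟩ <;> rcases Y with ⟨p',q',r',s'⟩ <;>
    simp only [mat, Amat, Bmat, M2.mul_def, M2.mk.injEq, if_true, if_false] at h ⊢ <;>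
    norm_num at h <;> omega

lemma inj_normal : ∀ (n : ℕ) (u v : List (Fin 2)), u.length + v.length ≤ n →
    Normal u → Normal v → φl u = φl v → u = v := by
  intro n
  induction n with
  | zero =>
    intro u v hlen _ _ _
    cases u <;> cases v <;> simp_all
  | succ n ih =>
    intro u v hlen hu hv heq
    cases u with
    | nil =>
      cases v with
      | nil => rfl
      | cons c t => exact absurd heq.symm (phi_ne_one _ hv (by simp))
    | cons c t =>
      cases v with
      | nil => exact absurd heq (phi_ne_one _ hu (by simp))
      | cons c' t' =>
        have hcc : c = c' := by
          rcases fin2 c with rfl | rfl <;> rcases fin2 c' with rfl | rfl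
          · rfl
          · exact absurd heq (first_letter hu hv)
          · exact absurd heq.symm (first_letter hv hu)
          · rfl
        subst hcc
        have heq2 : φl t = φl t' := by
          apply mat_cancel c
          rw [← φl_cons, ← φl_cons, heq]
        have hlen2 : t.length + t'.length ≤ n := by
          simp only [List.length_cons] at hlen; omega
        rw [ih t t' hlen2 (normal_tail hu) (normal_tail hv) heq2]

lemma φS_injective : Function.Injective φS := by
  intro x y heq
  obtain ⟨mx, rfl⟩ := Con.mk'_surjective (c := conGen rel) x
  obtain ⟨my, rfl⟩ := Con.mk'_surjective (c := conGen rel) y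
  have hx : (Con.mk' (conGen rel)) mx = πl (red (FreeMonoid.toList mx)) := by
    rw [πl_red]; unfold πl π; rw [FreeMonoid.ofList_toList]; rfl
  have hy : (Con.mk' (conGen rel)) my = πl (red (FreeMonoid.toList my)) := by
    rw [πl_red]; unfold πl π; rw [FreeMonoid.ofList_toList]; rfl
  rw [hx, hy] at heq ⊢
  rw [φS_πl, φS_πl] at heq
  rw [inj_normal (List.length (red (FreeMonoid.toList mx)) + List.length (red (FreeMonoid.toList my)))
      _ _ le_rfl (normal_red _) (normal_red _) heq]


/-! ### LEF assembly -/

lemma M2_ext {M N : M2 ℤ} (h1 : M.p = N.p) (h2 : M.q = N.q) (h3 : M.r = N.r)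
    (h4 : M.s = N.s) : M = N := by
  rcases M; rcases N; simp_all

def entdiff (M N : M2 ℤ) : ℕ :=
  max (max (M.p - N.p).natAbs (M.q - N.q).natAbs) (max (M.r - N.r).natAbs (M.s - N.s).natAbs)

lemma int_eq_of_cast_eq {n : ℕ} {x y : ℤ} (h : ((x : ZMod n)) = (y : ZMod n))
    (hlt : (x - y).natAbs < n) : x = y := by
  have hdvd : ((n : ℤ)) ∣ (x - y) := by
    rw [← ZMod.intCast_zmod_eq_zero_iff_dvd]
    push_cast
    rw [h]; ring
  have habs : |x - y| < (n : ℤ) := by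
    rw [Int.abs_eq_natAbs]
    exact_mod_cast hlt
  have := Int.eq_zero_of_abs_lt_dvd hdvd habs
  omega

theorem S_isLEF' : ∀ H : Finset S, ∃ (F : Type) (_ : Semigroup F) (_ : Fintype F) (f : S → F),
    Set.InjOn f ↑H ∧
      ∀ x ∈ H, ∀ y ∈ H, x * y ∈ H → f (x * y) = f x * f y := by
  intro H
  set n : ℕ := (H ×ˢ H).sup (fun q => entdiff (φS q.1) (φS q.2)) + 1 with hn
  refine ⟨M2 (ZMod n), Monoid.toSemigroup, inferInstance,
    fun s => M2.map (Int.castRingHom (ZMod n)) (φS s), ?_, ?_⟩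
  · intro x hx y hy hfeq
    apply φS_injective
    have hmem : (x, y) ∈ H ×ˢ H := Finset.mem_product.mpr ⟨hx, hy⟩
    have hsup : entdiff (φS x) (φS y) < n := by
      have h2 := Finset.le_sup (f := fun q => entdiff (φS q.1) (φS q.2)) hmem
      simp only at h2
      omega
    have e1 := congrArg M2.p hfeq
    have e2 := congrArg M2.q hfeq
    have e3 := congrArg M2.r hfeq
    have e4 := congrArg M2.s hfeq
    simp only [M2.map] at e1 e2 e3 e4
    have hb : (((φS x).p - (φS y).p).natAbs < n) ∧ (((φS x).q - (φS y).q).natAbs < n) ∧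
        (((φS x).r - (φS y).r).natAbs < n) ∧ (((φS x).s - (φS y).s).natAbs < n) := by
      unfold entdiff at hsup
      omega
    exact M2_ext (int_eq_of_cast_eq e1 hb.1) (int_eq_of_cast_eq e2 hb.2.1)
      (int_eq_of_cast_eq e3 hb.2.2.1) (int_eq_of_cast_eq e4 hb.2.2.2)
  · intro x _ y _ _
    show M2.map _ (φS (x*y)) = _
    rw [map_mul]
    exact M2.map_mul _ _ _

/-- The monoid `S = ⟨a, b ∣ abab = 1, baba = 1⟩` is an LEF semigroup. -/
theorem S_isLEF : IsLEF S := S_isLEF'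


end Stmt4
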